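/- arXiv:1208.1977 — 4 statements merged into one kernel-verified Lean document; each statement's English description precedes it below -/
import Mathlib

section
/- Let α > 2, a > 0, P̂ > 0, and Z₁, Z₂ > 0. Define S(b) = 1/(Z₁ + 1 + a(P̂ b)^{2/α}) + 1/(Z₂ + 1 + 1/(a(P̂ b)^{2/α})) for b > 0. Then S attains its unique maximum at b_opt = (1/P̂)(Z₁/(a Z₂))^{α/2}. -/
open Real

lemma sir_key (Z₁ Z₂ t : ℝ) (hZ₁ : 0 < Z₁) (hZ₂ : 0 < Z₂) (ht : 0 < t)
    (hne : Z₂ * t ≠ Z₁) :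
    1 / (Z₁ + 1 + t) + 1 / (Z₂ + 1 + 1 / t) <
      1 / (Z₁ + 1 + Z₁ / Z₂) + 1 / (Z₂ + 1 + 1 / (Z₁ / Z₂)) := by
  have hA : 0 < Z₁ + 1 + t := by linarith
  have hB : 0 < Z₂ + 1 + 1 / t := by positivity
  have ht0 : 0 < Z₁ / Z₂ := by positivity
  have hA0 : 0 < Z₁ + 1 + Z₁ / Z₂ := by positivity
  have hB0 : 0 < Z₂ + 1 + 1 / (Z₁ / Z₂) := by positivity
  have key : 1 / (Z₁ + 1 + Z₁ / Z₂) + 1 / (Z₂ + 1 + 1 / (Z₁ / Z₂)) -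
      (1 / (Z₁ + 1 + t) + 1 / (Z₂ + 1 + 1 / t)) =
      (Z₂ * t - Z₁) ^ 2 /
        ((Z₁ * Z₂ + Z₁ + Z₂) * ((Z₁ + 1 + t) * ((Z₂ + 1) * t + 1))) := by
    field_simp
    ring
  have hpos : 0 < (Z₂ * t - Z₁) ^ 2 /
      ((Z₁ * Z₂ + Z₁ + Z₂) * ((Z₁ + 1 + t) * ((Z₂ + 1) * t + 1))) := by
    apply div_pos
    · have : Z₂ * t - Z₁ ≠ 0 := sub_ne_zero.mpr hne
      positivity
    · positivity
  linarith

/-- The two-RAT SIR coverage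
`S(b) = 1/(Z₁+1+a(P̂b)^{2/α}) + 1/(Z₂+1+1/(a(P̂b)^{2/α}))` attains its unique maximum
on `(0,∞)` at `b_opt = (1/P̂)(Z₁/(aZ₂))^{α/2}`. -/
theorem optimal_bias_sir_coverage (α a Phat Z₁ Z₂ : ℝ)
    (hα : 2 < α) (ha : 0 < a) (hP : 0 < Phat) (hZ₁ : 0 < Z₁) (hZ₂ : 0 < Z₂)
    (S : ℝ → ℝ)
    (hS : ∀ b : ℝ, 0 < b →
      S b = 1 / (Z₁ + 1 + a * (Phat * b) ^ (2 / α)) +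
            1 / (Z₂ + 1 + 1 / (a * (Phat * b) ^ (2 / α)))) :
    let bopt := (1 / Phat) * (Z₁ / (a * Z₂)) ^ (α / 2)
    0 < bopt ∧ (∀ b : ℝ, 0 < b → b ≠ bopt → S b < S bopt) := by
  intro bopt
  have hα0 : (0:ℝ) < α := by linarith
  have hx : (0:ℝ) < Z₁ / (a * Z₂) := by positivity
  have hbopt : 0 < bopt := by
    unfold bopt; positivity
  refine ⟨hbopt, fun b hb hbne => ?_⟩
  -- compute the value of the key expression at bopt
  have hPb : Phat * bopt = (Z₁ / (a * Z₂)) ^ (α / 2) := by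
    unfold bopt
    field_simp
  have hexp : (α / 2) * (2 / α) = 1 := by
    field_simp
  have htopt : a * (Phat * bopt) ^ (2 / α) = Z₁ / Z₂ := by
    rw [hPb, ← Real.rpow_mul hx.le, hexp, Real.rpow_one]
    field_simp
  set t := a * (Phat * b) ^ (2 / α) with htdef
  have ht : 0 < t := by
    have : 0 < Phat * b := by positivity
    positivity
  have htne : Z₂ * t ≠ Z₁ := by
    intro h
    apply hbne
    have ht' : t = Z₁ / Z₂ := by
      field_simp at h ⊢
      linarith
    -- from t = Z₁/Z₂ deduce b = bopt
    have h1 : (Phat * b) ^ (2 / α) = Z₁ / (a * Z₂) := by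
      have := ht'
      rw [htdef] at this
      field_simp at this ⊢
      linarith [this]
    have h2 : Phat * b = (Z₁ / (a * Z₂)) ^ (α / 2) := by
      have hPb0 : 0 < Phat * b := by positivity
      have : ((Phat * b) ^ (2 / α)) ^ (α / 2) = (Phat * b) ^ ((2/α) * (α/2)) := by
        rw [← Real.rpow_mul hPb0.le]
      rw [h1] at this
      have hexp2 : (2 / α) * (α / 2) = 1 := by field_simp
      rw [hexp2, Real.rpow_one] at this
      exact this.symm
    have : Phat * b = Phat * bopt := by rw [h2, hPb]
    exact mul_left_cancel₀ (ne_of_gt hP) this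
  rw [hS b hb, hS bopt hbopt, htopt, ← htdef]
  exact sir_key Z₁ Z₂ t hZ₁ hZ₂ ht htne
end

section
/- With S(b) and b_opt as above, S(b_opt) = (Z₂ + Z₁)/(Z₂ + Z₁ + Z₁Z₂), where Z₁, Z₂ > 0. In particular S(b_opt) does not depend on the density ratio a or the power ratio P̂. -/
open Real

/-- At the optimal bias `b_opt = (1/P̂)(Z₁/(aZ₂))^{α/2}`, the SIR coverage
`S(b) = 1/(Z₁+1+a(P̂b)^{2/α}) + 1/(Z₂+1+1/(a(P̂b)^{2/α}))` equals
`(Z₂+Z₁)/(Z₂+Z₁+Z₁Z₂)`, independent of `a` and `P̂`. -/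
theorem sir_coverage_at_optimal_bias (α a Phat Z₁ Z₂ : ℝ)
    (hα : 2 < α) (ha : 0 < a) (hP : 0 < Phat) (hZ₁ : 0 < Z₁) (hZ₂ : 0 < Z₂) :
    (fun b : ℝ => 1 / (Z₁ + 1 + a * (Phat * b) ^ (2 / α)) +
        1 / (Z₂ + 1 + 1 / (a * (Phat * b) ^ (2 / α))))
      ((1 / Phat) * (Z₁ / (a * Z₂)) ^ (α / 2))
      = (Z₂ + Z₁) / (Z₂ + Z₁ + Z₁ * Z₂) := by
  have hx : (0:ℝ) < Z₁ / (a * Z₂) := div_pos hZ₁ (mul_pos ha hZ₂)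
  have hαpos : (0:ℝ) < α := by linarith
  have key : (Phat * ((1 / Phat) * (Z₁ / (a * Z₂)) ^ (α / 2))) ^ (2 / α)
      = Z₁ / (a * Z₂) := by
    have h0 : Phat * (1 / Phat * (Z₁ / (a * Z₂)) ^ (α / 2)) = (Z₁ / (a * Z₂)) ^ (α / 2) := by
      rw [← mul_assoc, mul_one_div, div_self hP.ne', one_mul]
    rw [h0, ← Real.rpow_mul hx.le, show α / 2 * (2 / α) = 1 from by
      rw [div_mul_div_comm, mul_comm]; exact div_self (by positivity), Real.rpow_one]
  simp only [key]
  have h1 : a * (Z₁ / (a * Z₂)) = Z₁ / Z₂ := by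
    field_simp
  rw [h1]
  field_simp
  ring
end

section
/- With S(b) defined as above, S is strictly quasiconcave on (0,∞): S is strictly increasing on (0, b_opt) and strictly decreasing on (b_opt, ∞). -/
open Real

lemma key_inc (Z₁ Z₂ x y : ℝ) (hZ₁ : 0 < Z₁) (hZ₂ : 0 < Z₂) (hx : 0 < x)
    (hxy : x < y) (hy : Z₂ * y ≤ Z₁) :
    1 / (Z₁ + 1 + x) + 1 / (Z₂ + 1 + 1 / x) <
      1 / (Z₁ + 1 + y) + 1 / (Z₂ + 1 + 1 / y) := by
  have hy0 : 0 < y := hx.trans hxy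
  have h1 : 1 / (Z₂ + 1 + 1 / x) = x / ((Z₂+1)*x + 1) := by
    rw [div_eq_div_iff (by positivity) (by positivity)]; field_simp
  have h2 : 1 / (Z₂ + 1 + 1 / y) = y / ((Z₂+1)*y + 1) := by
    rw [div_eq_div_iff (by positivity) (by positivity)]; field_simp
  rw [h1, h2, div_add_div _ _ (by positivity) (by positivity),
      div_add_div _ _ (by positivity) (by positivity),
      div_lt_div_iff₀ (by positivity) (by positivity)]
  have hB : ((Z₂+1)*x + 1) * ((Z₂+1)*y + 1) < (Z₁+1+x) * (Z₁+1+y) :=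
    calc ((Z₂+1)*x + 1) * ((Z₂+1)*y + 1)
        < (Z₁+1+x) * ((Z₂+1)*y + 1) := by
          apply mul_lt_mul_of_pos_right (by nlinarith) (by positivity)
      _ ≤ (Z₁+1+x) * (Z₁+1+y) := by
          apply mul_le_mul_of_nonneg_left (by nlinarith) (by positivity)
  nlinarith [mul_pos (show (0:ℝ) < y - x by linarith) (sub_pos.mpr hB)]

lemma key_dec (Z₁ Z₂ x y : ℝ) (hZ₁ : 0 < Z₁) (hZ₂ : 0 < Z₂) (hx : 0 < x)
    (hxy : x < y) (hx' : Z₁ ≤ Z₂ * x) :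
    1 / (Z₁ + 1 + y) + 1 / (Z₂ + 1 + 1 / y) <
      1 / (Z₁ + 1 + x) + 1 / (Z₂ + 1 + 1 / x) := by
  have hy0 : 0 < y := hx.trans hxy
  have h1 : 1 / (Z₂ + 1 + 1 / x) = x / ((Z₂+1)*x + 1) := by
    rw [div_eq_div_iff (by positivity) (by positivity)]; field_simp
  have h2 : 1 / (Z₂ + 1 + 1 / y) = y / ((Z₂+1)*y + 1) := by
    rw [div_eq_div_iff (by positivity) (by positivity)]; field_simp
  rw [h1, h2, div_add_div _ _ (by positivity) (by positivity),
      div_add_div _ _ (by positivity) (by positivity),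
      div_lt_div_iff₀ (by positivity) (by positivity)]
  have hB : (Z₁+1+x) * (Z₁+1+y) < ((Z₂+1)*x + 1) * ((Z₂+1)*y + 1) :=
    calc (Z₁+1+x) * (Z₁+1+y)
        ≤ ((Z₂+1)*x + 1) * (Z₁+1+y) := by
          apply mul_le_mul_of_nonneg_right (by nlinarith) (by positivity)
      _ < ((Z₂+1)*x + 1) * ((Z₂+1)*y + 1) := by
          apply mul_lt_mul_of_pos_left (by nlinarith) (by positivity)
  nlinarith [mul_pos (show (0:ℝ) < y - x by linarith) (sub_pos.mpr hB)]

/-- `S(b) = 1/(Z₁+1+a(P̂b)^{2/α}) + 1/(Z₂+1+1/(a(P̂b)^{2/α}))` is strictly quasiconcave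
on `(0,∞)`: strictly increasing up to `b_opt = (1/P̂)(Z₁/(aZ₂))^{α/2}` and strictly
decreasing afterwards. -/
theorem sir_coverage_quasiconcave (α a Phat Z₁ Z₂ : ℝ)
    (hα : 2 < α) (ha : 0 < a) (hP : 0 < Phat) (hZ₁ : 0 < Z₁) (hZ₂ : 0 < Z₂)
    (S : ℝ → ℝ)
    (hS : ∀ b : ℝ, 0 < b →
      S b = 1 / (Z₁ + 1 + a * (Phat * b) ^ (2 / α)) +
            1 / (Z₂ + 1 + 1 / (a * (Phat * b) ^ (2 / α)))) :
    let bopt := (1 / Phat) * (Z₁ / (a * Z₂)) ^ (α / 2)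
    StrictMonoOn S (Set.Ioc (0 : ℝ) bopt) ∧ StrictAntiOn S (Set.Ici bopt) := by
  intro bopt
  have hα0 : (0:ℝ) < α := by linarith
  have hq0 : 0 < 2 / α := by positivity
  have hbopt0 : 0 < bopt := by
    have := Real.rpow_pos_of_pos (show (0:ℝ) < Z₁ / (a * Z₂) by positivity) (α / 2)
    positivity
  set T : ℝ → ℝ := fun b => a * (Phat * b) ^ (2 / α) with hT
  have hTpos : ∀ b, 0 < b → 0 < T b := fun b hb => by
    have := Real.rpow_pos_of_pos (mul_pos hP hb) (2 / α); positivity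
  have hTmono : ∀ b₁ b₂, 0 < b₁ → b₁ < b₂ → T b₁ < T b₂ := by
    intro b₁ b₂ h1 h12
    apply mul_lt_mul_of_pos_left _ ha
    exact Real.rpow_lt_rpow (by positivity) (by nlinarith) hq0
  have hTle : ∀ b₁ b₂, 0 < b₁ → b₁ ≤ b₂ → T b₁ ≤ T b₂ := by
    intro b₁ b₂ h1 h12
    apply mul_le_mul_of_nonneg_left _ ha.le
    exact Real.rpow_le_rpow (by positivity) (by nlinarith) hq0.le
  have hTbopt : T bopt = Z₁ / Z₂ := by
    have h1 : Phat * bopt = (Z₁ / (a * Z₂)) ^ (α / 2) := by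
      show Phat * (1 / Phat * (Z₁ / (a * Z₂)) ^ (α / 2)) = _
      rw [← mul_assoc, mul_one_div_cancel hP.ne', one_mul]
    have h2 : ((Z₁ / (a * Z₂)) ^ (α / 2)) ^ (2 / α) = Z₁ / (a * Z₂) := by
      rw [← Real.rpow_mul (by positivity)]
      rw [show α / 2 * (2 / α) = 1 by field_simp, Real.rpow_one]
    simp only [hT, h1, h2]
    field_simp
  constructor
  · intro b₁ hb₁ b₂ hb₂ h12
    rw [hS b₁ hb₁.1, hS b₂ (hb₁.1.trans h12)]
    apply key_inc _ _ _ _ hZ₁ hZ₂ (hTpos b₁ hb₁.1) (hTmono _ _ hb₁.1 h12)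
    have : T b₂ ≤ Z₁ / Z₂ := hTbopt ▸ hTle b₂ bopt (hb₁.1.trans h12) hb₂.2
    rw [mul_comm]; exact (le_div_iff₀ hZ₂).mp this
  · intro b₁ hb₁ b₂ hb₂ h12
    have h1 : 0 < b₁ := lt_of_lt_of_le hbopt0 hb₁
    rw [hS b₁ h1, hS b₂ (h1.trans h12)]
    apply key_dec _ _ _ _ hZ₁ hZ₂ (hTpos b₁ h1) (hTmono _ _ h1 h12)
    have : Z₁ / Z₂ ≤ T b₁ := hTbopt ▸ hTle bopt b₁ hbopt0 hb₁
    rw [mul_comm]; exact (div_le_iff₀ hZ₂).mp this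
end

section
/- At the optimal bias b_opt = (1/P̂)(Z₁/(aZ₂))^{α/2}, the offload fraction A₂ = a/(a + (1/(P̂ b_opt))^{2/α}) equals Z₁/(Z₁ + Z₂), independent of the density ratio a and power ratio P̂. -/
open Real

/-- At `b_opt = (1/P̂)(Z₁/(aZ₂))^{α/2}`, the offload fraction
`A₂ = a/(a + (1/(P̂ b_opt))^{2/α})` equals `Z₁/(Z₁+Z₂)`. -/
theorem optimal_offload_fraction (α a Phat Z₁ Z₂ : ℝ)
    (hα : 2 < α) (ha : 0 < a) (hP : 0 < Phat) (hZ₁ : 0 < Z₁) (hZ₂ : 0 < Z₂) :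
    let bopt := (1 / Phat) * (Z₁ / (a * Z₂)) ^ (α / 2)
    a / (a + (1 / (Phat * bopt)) ^ (2 / α)) = Z₁ / (Z₁ + Z₂) := by
  intro bopt
  have hαpos : (0:ℝ) < α := by linarith
  have hr : 0 < Z₁ / (a * Z₂) := div_pos hZ₁ (mul_pos ha hZ₂)
  have h1 : Phat * bopt = (Z₁ / (a * Z₂)) ^ (α / 2) := by
    simp only [bopt]
    rw [← mul_assoc, mul_one_div_cancel hP.ne', one_mul]
  have h2 : (1 / (Phat * bopt)) ^ (2 / α) = (a * Z₂) / Z₁ := by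
    rw [h1, one_div, ← rpow_neg_one ((Z₁ / (a * Z₂)) ^ (α / 2)), ← rpow_mul hr.le,
      ← rpow_mul hr.le]
    have h3 : α / 2 * -1 * (2 / α) = -1 := by field_simp
    rw [h3, rpow_neg_one, inv_div]
  rw [h2]
  field_simp
end
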